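/- Let A be a commutative unital ring, let π be an ideal of A, and let n ≥ 2. Then Δ_n(π) = F_n(π)·Γ_n(π²), i.e., every element of Δ_n(π) is a product of an element of F_n(π) and an element of Γ_n(π²). -/
import Mathlib


open Matrix

/-- `SL n A` is the special linear group `SL_n(A)`. -/
abbrev SL (n : ℕ) (A : Type) [CommRing A] : Type := Matrix.SpecialLinearGroup (Fin n) A

/-- The elementary matrix `e_{ij}(a) = 1_n + a·e_{ij}` as an element of `SL_n(A)` (for `i ≠ j`). -/
def elem (A : Type) [CommRing A] {n : ℕ} (i j : Fin n) (hij : i ≠ j) (a : A) : SL n A :=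
  ⟨Matrix.transvection i j a, Matrix.det_transvection_of_ne i j hij a⟩

/-- The true elementary subgroup `F_n(π)`: the subgroup of `SL_n(A)` generated by the
elementary matrices with coefficients in the ideal `π`. -/
def Fgrp (A : Type) [CommRing A] (n : ℕ) (π : Ideal A) : Subgroup (SL n A) :=
  Subgroup.closure {x | ∃ (i j : Fin n) (hij : i ≠ j), ∃ a ∈ π, x = elem A i j hij a}

/-- The principal congruence subgroup `Γ_n(π) = {g ∈ SL_n(A) : g ≡ 1_n mod π}`, as a set. -/
def Γset (A : Type) [CommRing A] (n : ℕ) (π : Ideal A) : Set (SL n A) :=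
  {g | ∀ p q : Fin n, (g : Matrix (Fin n) (Fin n) A) p q - (1 : Matrix (Fin n) (Fin n) A) p q ∈ π}

/-- The secondary congruence subgroup
`Δ_n(π) = {g ∈ SL_n(A) : g ≡ 1_n mod π, g_{ii} ≡ 1 mod π²}`, as a set. -/
def Δset (A : Type) [CommRing A] (n : ℕ) (π : Ideal A) : Set (SL n A) :=
  {g | (∀ p q : Fin n, (g : Matrix (Fin n) (Fin n) A) p q
          - (1 : Matrix (Fin n) (Fin n) A) p q ∈ π) ∧
       (∀ p : Fin n, (g : Matrix (Fin n) (Fin n) A) p p - 1 ∈ π ^ 2)}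

section Aux
variable {A : Type} [CommRing A] {n : ℕ} (π : Ideal A)

lemma mem_sq {a b : A} (ha : a ∈ π) (hb : b ∈ π) : a * b ∈ π ^ 2 := by
  rw [pow_two]; exact Ideal.mul_mem_mul ha hb

lemma sum_entries_mem (I : Ideal A) (Ms : List (Matrix (Fin n) (Fin n) A))
    (h : ∀ M ∈ Ms, ∀ p q, M p q ∈ I) : ∀ p q : Fin n, Ms.sum p q ∈ I := by
  induction Ms with
  | nil => intro p q; simpa using I.zero_mem
  | cons M Ms ih =>
    intro p q
    rw [List.sum_cons]
    simp only [Matrix.add_apply]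
    exact I.add_mem (h M (List.mem_cons_self ..) p q)
      (ih (fun M' hM' => h M' (List.mem_cons_of_mem _ hM')) p q)

lemma prod_one_add (Ms : List (Matrix (Fin n) (Fin n) A))
    (h : ∀ M ∈ Ms, ∀ p q, M p q ∈ π) :
    ∀ p q : Fin n, ((Ms.map (fun M => 1 + M)).prod - (1 + Ms.sum)) p q ∈ π ^ 2 := by
  induction Ms with
  | nil => intro p q; simpa using (π ^ 2).zero_mem
  | cons M Ms ih =>
    intro p q
    have hM : ∀ p q, M p q ∈ π := h M (List.mem_cons_self ..)
    have htail : ∀ M' ∈ Ms, ∀ p q, M' p q ∈ π :=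
      fun M' hM' => h M' (List.mem_cons_of_mem _ hM')
    have hS : ∀ p q, Ms.sum p q ∈ π := sum_entries_mem π Ms htail
    set P := (Ms.map (fun M => 1 + M)).prod with hP
    set F := P - (1 + Ms.sum) with hF
    have key : ((M :: Ms).map (fun M => 1 + M)).prod - (1 + (M :: Ms).sum)
        = F + M * Ms.sum + M * F := by
      rw [List.map_cons, List.prod_cons, List.sum_cons, hF]
      noncomm_ring
    rw [key]
    simp only [Matrix.add_apply, Matrix.mul_apply]
    refine (π ^ 2).add_mem ((π ^ 2).add_mem (ih htail p q) ?_) ?_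
    · exact Ideal.sum_mem _ fun k _ => mem_sq π (hM p k) (hS k q)
    · exact Ideal.sum_mem _ fun k _ => (π ^ 2).mul_mem_left _ (ih htail k q)

lemma coe_prod_one_add {α : Type} (E : α → SL n A) (M : α → Matrix (Fin n) (Fin n) A)
    (hEM : ∀ r, ((E r : SL n A) : Matrix (Fin n) (Fin n) A) = 1 + M r) (l : List α) :
    (((l.map E).prod : SL n A) : Matrix (Fin n) (Fin n) A)
      = (l.map (fun r => 1 + M r)).prod := by
  induction l with
  | nil => simp
  | cons x l ih =>
    rw [List.map_cons, List.prod_cons, List.map_cons, List.prod_cons,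
      Matrix.SpecialLinearGroup.coe_mul, hEM, ih]

end Aux

section Aux2
variable {A : Type} [CommRing A] {n : ℕ} (π : Ideal A)

lemma elem_coe (i j : Fin n) (h : i ≠ j) (a : A) :
    ((elem A i j h a : SL n A) : Matrix (Fin n) (Fin n) A)
      = 1 + Matrix.single i j a := rfl

lemma elem_mem_delta {i j : Fin n} (h : i ≠ j) {a : A} (ha : a ∈ π) :
    elem A i j h a ∈ Δset A n π := by
  constructor
  · intro p q
    rw [elem_coe]
    simp only [Matrix.add_apply, add_sub_cancel_left]
    by_cases hpq : i = p ∧ j = q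
    · rw [hpq.1, hpq.2, Matrix.single_apply_same]; exact ha
    · rw [Matrix.single_apply_of_ne _ _ _ _ _ hpq]; exact π.zero_mem
  · intro p
    rw [elem_coe]
    have h1 : (1 : Matrix (Fin n) (Fin n) A) p p = 1 := Matrix.one_apply_eq p
    simp only [Matrix.add_apply, h1]
    rw [Matrix.single_apply_of_ne]
    · simpa using (π ^ 2).zero_mem
    · rintro ⟨rfl, rfl⟩; exact h rfl

lemma elem_inv (i j : Fin n) (h : i ≠ j) (a : A) :
    (elem A i j h a)⁻¹ = elem A i j h (-a) := by
  refine inv_eq_of_mul_eq_one_right ?_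
  ext p q
  show ((elem A i j h a * elem A i j h (-a) : SL n A) : Matrix (Fin n) (Fin n) A) p q = _
  rw [Matrix.SpecialLinearGroup.coe_mul]
  show (Matrix.transvection i j a * Matrix.transvection i j (-a)) p q = _
  rw [Matrix.transvection_mul_transvection_same _ _ h, add_neg_cancel]
  simp [Matrix.transvection]

lemma delta_mul {g h : SL n A} (hg : g ∈ Δset A n π) (hh : h ∈ Δset A n π) :
    g * h ∈ Δset A n π := by
  set G := (g : Matrix (Fin n) (Fin n) A) with hG
  set H := (h : Matrix (Fin n) (Fin n) A) with hH
  set O := (1 : Matrix (Fin n) (Fin n) A) with hO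
  have key : ∀ p q : Fin n,
      ((g * h : SL n A) : Matrix (Fin n) (Fin n) A) p q - O p q
      = (∑ k, (G p k - O p k) * (H k q - O k q)) + (G p q - O p q) + (H p q - O p q) := by
    intro p q
    have e1 : (∑ k, (G p k - O p k) * (H k q - O k q))
        = (G * H) p q - (G * O) p q - (O * H) p q + (O * O) p q := by
      simp only [Matrix.mul_apply, ← Finset.sum_add_distrib, ← Finset.sum_sub_distrib]
      exact Finset.sum_congr rfl fun k _ => by ring
    rw [Matrix.SpecialLinearGroup.coe_mul, e1, ← hG, ← hH]
    simp only [hO, Matrix.mul_one, Matrix.one_mul]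
    ring
  have hπ2 : π ^ 2 ≤ π := Ideal.pow_le_self two_ne_zero
  constructor
  · intro p q
    rw [key p q]
    refine π.add_mem (π.add_mem (Ideal.sum_mem _ fun k _ => hπ2 ?_) (hg.1 p q)) (hh.1 p q)
    exact mem_sq π (hg.1 p k) (hh.1 k q)
  · intro p
    have h1 : O p p = 1 := Matrix.one_apply_eq p
    have := key p p
    rw [h1] at this
    rw [this]
    refine (π ^ 2).add_mem ((π ^ 2).add_mem (Ideal.sum_mem _ fun k _ => ?_) (hg.2 p)) (hh.2 p)
    exact mem_sq π (hg.1 p k) (hh.1 k p)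

lemma F_subset_delta {g : SL n A} (hg : g ∈ Fgrp A n π) : g ∈ Δset A n π := by
  have one_mem : (1 : SL n A) ∈ Δset A n π := by
    constructor
    · intro p q; simpa using π.zero_mem
    · intro p; simpa using (π ^ 2).zero_mem
  have main : g ∈ Δset A n π ∧ g⁻¹ ∈ Δset A n π := by
    refine Subgroup.closure_induction (p := fun x _ => x ∈ Δset A n π ∧ x⁻¹ ∈ Δset A n π)
      ?_ ?_ ?_ ?_ hg
    · rintro x ⟨i, j, hij, a, ha, rfl⟩
      refine ⟨elem_mem_delta π hij ha, ?_⟩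
      rw [elem_inv]
      exact elem_mem_delta π hij (π.neg_mem ha)
    · refine ⟨one_mem, ?_⟩
      rw [inv_one]
      exact one_mem
    · rintro x y _ _ ⟨hx, hx'⟩ ⟨hy, hy'⟩
      refine ⟨delta_mul π hx hy, ?_⟩
      rw [_root_.mul_inv_rev]
      exact delta_mul π hy' hx'
    · rintro x _ ⟨hx, hx'⟩
      exact ⟨hx', by simpa using hx⟩
  exact main.1

end Aux2

/-- For `n ≥ 2`, `Δ_n(π) = F_n(π)·Γ_n(π²)`: every element of `Δ_n(π)` is a product of an
element of `F_n(π)` and an element of `Γ_n(π²)` (and conversely). -/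
theorem delta_eq_F_mul_gamma_sq (A : Type) [CommRing A] (π : Ideal A) (n : ℕ) (hn : 2 ≤ n) :
    Δset A n π = {g | ∃ e ∈ Fgrp A n π, ∃ h ∈ Γset A n (π ^ 2), g = e * h} := by
  ext g
  constructor
  · intro hg
    obtain ⟨hg1, hg2⟩ := hg
    set c : Fin n × Fin n → A := fun r =>
      (g : Matrix (Fin n) (Fin n) A) r.1 r.2 - (1 : Matrix (Fin n) (Fin n) A) r.1 r.2 with hc
    have hcπ : ∀ r, c r ∈ π := fun r => hg1 r.1 r.2
    set M : Fin n × Fin n → Matrix (Fin n) (Fin n) A := fun r =>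
      if h : r.1 ≠ r.2 then Matrix.single r.1 r.2 (c r) else 0 with hM
    set E : Fin n × Fin n → SL n A := fun r =>
      if h : r.1 ≠ r.2 then elem A r.1 r.2 h (c r) else 1 with hE
    have hEM : ∀ r, ((E r : SL n A) : Matrix (Fin n) (Fin n) A) = 1 + M r := by
      intro r
      by_cases h : r.1 ≠ r.2
      · rw [hE, hM]; simp only [dif_pos h]; exact elem_coe r.1 r.2 h (c r)
      · rw [hE, hM]; simp only [dif_neg h, add_zero]; rfl
    set L : List (Fin n × Fin n) := (Finset.univ : Finset (Fin n × Fin n)).toList with hL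
    set e : SL n A := (L.map E).prod with he
    have heF : e ∈ Fgrp A n π := by
      apply Subgroup.list_prod_mem
      intro x hx
      rw [List.mem_map] at hx
      obtain ⟨r, _, rfl⟩ := hx
      by_cases h : r.1 ≠ r.2
      · rw [hE]; simp only [dif_pos h]
        exact Subgroup.subset_closure ⟨r.1, r.2, h, c r, hcπ r, rfl⟩
      · rw [hE]; simp only [dif_neg h]
        exact (Fgrp A n π).one_mem
    have Mentries : ∀ X ∈ L.map M, ∀ p q, X p q ∈ π := by
      intro X hX p q
      rw [List.mem_map] at hX
      obtain ⟨r, _, rfl⟩ := hX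
      by_cases h : r.1 ≠ r.2
      · rw [hM]; simp only [dif_pos h]
        by_cases hpq : r.1 = p ∧ r.2 = q
        · rw [hpq.1, hpq.2, Matrix.single_apply_same]; exact hcπ ⟨r.1, r.2⟩
        · rw [Matrix.single_apply_of_ne _ _ _ _ _ hpq]; exact π.zero_mem
      · rw [hM]; simp only [dif_neg h, Matrix.zero_apply]; exact π.zero_mem
    have hprod := prod_one_add π (L.map M) Mentries
    have hecoe : (e : Matrix (Fin n) (Fin n) A)
        = ((L.map M).map (fun X => 1 + X)).prod := by
      rw [he, coe_prod_one_add E M hEM L, List.map_map]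
      rfl
    have hsum : (L.map M).sum = ∑ r : Fin n × Fin n, M r := Finset.sum_map_toList _ _
    have hval : ∀ p q : Fin n, (∑ r : Fin n × Fin n, M r) p q
        = if p ≠ q then c (p, q) else 0 := by
      intro p q
      rw [Matrix.sum_apply]
      rw [Finset.sum_eq_single (p, q)]
      · by_cases h : p ≠ q
        · rw [hM]; simp only [dif_pos h, if_pos h]
          exact Matrix.single_apply_same p q _
        · rw [hM]; simp only [dif_neg h, if_neg h, Matrix.zero_apply]
      · intro r _ hr
        by_cases h : r.1 ≠ r.2
        · rw [hM]; simp only [dif_pos h]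
          refine Matrix.single_apply_of_ne _ _ _ _ _ ?_
          rintro ⟨h1, h2⟩
          exact hr (Prod.ext h1 h2)
        · rw [hM]; simp only [dif_neg h, Matrix.zero_apply]
      · intro habs; exact absurd (Finset.mem_univ _) habs
    have hgsum : ∀ p q : Fin n,
        ((g : Matrix (Fin n) (Fin n) A) - (1 + (L.map M).sum)) p q ∈ π ^ 2 := by
      intro p q
      rw [Matrix.sub_apply, Matrix.add_apply, hsum, hval]
      by_cases h : p ≠ q
      · rw [if_pos h, hc]
        have : (g : Matrix (Fin n) (Fin n) A) p q
            - ((1 : Matrix (Fin n) (Fin n) A) p q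
              + ((g : Matrix (Fin n) (Fin n) A) p q
                - (1 : Matrix (Fin n) (Fin n) A) p q)) = 0 := by ring
        rw [this]; exact (π ^ 2).zero_mem
      · push_neg at h
        subst h
        rw [if_neg (by simp), add_zero, Matrix.one_apply_eq]
        exact hg2 p
    have key : ∀ p q : Fin n,
        ((g : Matrix (Fin n) (Fin n) A) - (e : Matrix (Fin n) (Fin n) A)) p q ∈ π ^ 2 := by
      intro p q
      have : ((g : Matrix (Fin n) (Fin n) A) - (e : Matrix (Fin n) (Fin n) A)) p q
          = ((g : Matrix (Fin n) (Fin n) A) - (1 + (L.map M).sum)) p q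
            - ((((L.map M).map (fun X => 1 + X)).prod - (1 + (L.map M).sum)) p q) := by
        rw [hecoe]
        simp only [Matrix.sub_apply, Matrix.add_apply]
        ring
      rw [this]
      exact (π ^ 2).sub_mem (hgsum p q) (hprod p q)
    refine ⟨e, heF, e⁻¹ * g, ?_, (mul_inv_cancel_left e g).symm⟩
    intro p q
    have hmat : ((e⁻¹ * g : SL n A) : Matrix (Fin n) (Fin n) A)
          - (1 : Matrix (Fin n) (Fin n) A)
        = ((e⁻¹ : SL n A) : Matrix (Fin n) (Fin n) A)
          * ((g : Matrix (Fin n) (Fin n) A) - (e : Matrix (Fin n) (Fin n) A)) := by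
      rw [Matrix.SpecialLinearGroup.coe_mul, Matrix.mul_sub]
      congr 1
      rw [← Matrix.SpecialLinearGroup.coe_mul, inv_mul_cancel]
      rfl
    have : ((e⁻¹ * g : SL n A) : Matrix (Fin n) (Fin n) A) p q
          - (1 : Matrix (Fin n) (Fin n) A) p q
        = (((e⁻¹ : SL n A) : Matrix (Fin n) (Fin n) A)
          * ((g : Matrix (Fin n) (Fin n) A) - (e : Matrix (Fin n) (Fin n) A))) p q := by
      rw [← hmat, Matrix.sub_apply]
    rw [this, Matrix.mul_apply]
    exact Ideal.sum_mem _ fun k _ => (π ^ 2).mul_mem_left _ (key k q)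
  · rintro ⟨e, heF, h, hh, rfl⟩
    have hhΔ : h ∈ Δset A n π := by
      refine ⟨fun p q => Ideal.pow_le_self two_ne_zero (hh p q), fun p => ?_⟩
      have := hh p p
      rwa [Matrix.one_apply_eq] at this
    exact delta_mul π (F_subset_delta π heF) hhΔ
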